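/- Let A be an n×n real matrix, P an n×n symmetric positive definite matrix such that Q := −(P A + Aᵀ P) is (symmetric) positive definite, and let γ ≥ 0 satisfy 2 γ ‖P‖ ≤ λmin(Q), where λmin(Q) is the smallest eigenvalue of Q and ‖P‖ is the operator norm induced by the Euclidean norm. Then for every n×n real matrix G with operator norm ‖G‖ ≤ γ and every y ∈ ℝⁿ, the derivative of the quadratic Lyapunov function V(y) = yᵀ P y along the polynomial vector field ẏ = (A + G) y is nonpositive: yᵀ(P A + Aᵀ P) y + 2 yᵀ P G y ≤ 0. [The conclusion of the paper's Proposition 4: V(x) = (x − x°)ᵀP(x − x°) is a valid local Lyapunov function for the polynomial system ẋ = [A + G(x − x°)](x − x°) whenever ‖G(x − x°)‖ ≤ γ on the region of interest.] -/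

import Mathlib

open Matrix RealInnerProductSpace

/-- Rayleigh lower bound: for a real symmetric matrix `Q`,
`(⨅ i, λ_i) * (y ⬝ᵥ y) ≤ y ⬝ᵥ Q *ᵥ y`. -/
lemma rayleigh_lower {n : ℕ} (Q : Matrix (Fin n) (Fin n) ℝ) (hQ : Q.IsHermitian)
    (y : Fin n → ℝ) :
    (⨅ i, hQ.eigenvalues i) * (y ⬝ᵥ y) ≤ y ⬝ᵥ Q.mulVec y := by
  rcases Nat.eq_zero_or_pos n with hn | hn
  · subst hn
    simp [dotProduct]
  haveI : Nonempty (Fin n) := ⟨⟨0, hn⟩⟩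
  set U : Matrix (Fin n) (Fin n) ℝ := (hQ.eigenvectorUnitary : Matrix (Fin n) (Fin n) ℝ) with hU
  set d : Fin n → ℝ := hQ.eigenvalues with hd
  set c : ℝ := ⨅ i, d i with hc
  set z : Fin n → ℝ := star U *ᵥ y with hz
  have hUU : U * star U = 1 := (Matrix.mem_unitaryGroup_iff).mp hQ.eigenvectorUnitary.2
  have key : y ⬝ᵥ Q.mulVec y = z ⬝ᵥ (Matrix.diagonal d).mulVec z := by
    conv_lhs => rw [hQ.spectral_theorem]
    have hdiag : Matrix.diagonal ((RCLike.ofReal (K := ℝ)) ∘ d) = Matrix.diagonal d := by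
      rfl
    rw [hdiag]
    rw [Unitary.conjStarAlgAut_apply]
    rw [← Matrix.mulVec_mulVec, ← Matrix.mulVec_mulVec, Matrix.dotProduct_mulVec]
    congr 1
    rw [hz]
    have : star U = Uᵀ := by
      rw [Matrix.star_eq_conjTranspose, Matrix.conjTranspose_eq_transpose_of_trivial]
    rw [this, Matrix.mulVec_transpose]
  have hUz : U *ᵥ z = y := by
    rw [hz, Matrix.mulVec_mulVec, hUU, Matrix.one_mulVec]
  have hzz : z ⬝ᵥ z = y ⬝ᵥ y := by
    have hstar : star U = Uᵀ := by
      rw [Matrix.star_eq_conjTranspose, Matrix.conjTranspose_eq_transpose_of_trivial]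
    calc z ⬝ᵥ z = z ⬝ᵥ (Uᵀ *ᵥ y) := by rw [← hstar, ← hz]
      _ = (z ᵥ* Uᵀ) ⬝ᵥ y := by rw [Matrix.dotProduct_mulVec]
      _ = (U *ᵥ z) ⬝ᵥ y := by rw [Matrix.vecMul_transpose]
      _ = y ⬝ᵥ y := by rw [hUz]
  rw [key, ← hzz]
  have hdot : z ⬝ᵥ (Matrix.diagonal d).mulVec z = ∑ i, d i * z i ^ 2 := by
    simp [dotProduct, Matrix.mulVec_diagonal]
    apply Finset.sum_congr rfl
    intro i _
    ring
  have hzdot : z ⬝ᵥ z = ∑ i, z i ^ 2 := by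
    simp [dotProduct]
    apply Finset.sum_congr rfl
    intro i _
    ring
  rw [hdot, hzdot, Finset.mul_sum]
  apply Finset.sum_le_sum
  intro i _
  have hci : c ≤ d i := ciInf_le (Finite.bddBelow_range d) i
  exact mul_le_mul_of_nonneg_right hci (sq_nonneg _)

/-- Proposition 4 (conclusion): if `P` is symmetric positive definite,
`Q = −(PA + AᵀP)` is positive definite, and `2γ‖P‖ ≤ λmin(Q)` with `γ ≥ 0`, then for every
matrix `G` with operator norm `‖G‖ ≤ γ` and every `y`, the Lyapunov derivative of
`V(y) = yᵀPy` along `ẏ = (A + G)y` is nonpositive. -/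
theorem stmt_8 {n : ℕ} (A P Q : Matrix (Fin n) (Fin n) ℝ)
    (hP : P.PosDef) (hQdef : Q = -(P * A + Aᵀ * P)) (hQ : Q.PosDef)
    (γ : ℝ) (hγ : 0 ≤ γ)
    (hgap : 2 * γ * ‖Matrix.toEuclideanCLM (𝕜 := ℝ) P‖ ≤ ⨅ i, hQ.isHermitian.eigenvalues i) :
    ∀ G : Matrix (Fin n) (Fin n) ℝ, ‖Matrix.toEuclideanCLM (𝕜 := ℝ) G‖ ≤ γ →
      ∀ y : EuclideanSpace ℝ (Fin n),
        y ⬝ᵥ (P * A + Aᵀ * P).mulVec y + 2 * (y ⬝ᵥ P.mulVec (G.mulVec y)) ≤ 0 := by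
  intro G hG y
  set c : ℝ := ⨅ i, hQ.isHermitian.eigenvalues i with hc
  -- first term: y ⬝ᵥ (PA + AᵀP) y = - y ⬝ᵥ Q y ≤ - c ‖y‖²
  have h1 : y ⬝ᵥ (P * A + Aᵀ * P).mulVec y ≤ -(c * (y ⬝ᵥ (y : Fin n → ℝ))) := by
    have : (P * A + Aᵀ * P) = -Q := by rw [hQdef, neg_neg]
    rw [this]
    have := rayleigh_lower Q hQ.isHermitian y
    simp only [Matrix.neg_mulVec, dotProduct_neg]
    linarith
  -- second term bound via operator norms
  have hyy : (y : Fin n → ℝ) ⬝ᵥ (y : Fin n → ℝ) = ‖y‖ ^ 2 := by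
    rw [← real_inner_self_eq_norm_sq]
    rw [EuclideanSpace.inner_eq_star_dotProduct]
    rfl
  have h2 : y ⬝ᵥ P.mulVec (G.mulVec y) ≤
      ‖Matrix.toEuclideanCLM (𝕜 := ℝ) P‖ * ‖Matrix.toEuclideanCLM (𝕜 := ℝ) G‖ * ‖y‖ ^ 2 := by
    set Pc := Matrix.toEuclideanCLM (𝕜 := ℝ) P
    set Gc := Matrix.toEuclideanCLM (𝕜 := ℝ) G
    have hGy : (WithLp.equiv 2 _) (Gc y) = G.mulVec y := by
      rfl
    have hPGy : (WithLp.equiv 2 _) (Pc (Gc y)) = P.mulVec (G.mulVec y) := by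
      rfl
    have hinner : y ⬝ᵥ P.mulVec (G.mulVec y) = ⟪y, Pc (Gc y)⟫ := by
      rw [EuclideanSpace.inner_eq_star_dotProduct, Matrix.ofLp_toEuclideanCLM,
        Matrix.ofLp_toEuclideanCLM, star_trivial, dotProduct_comm]
    rw [hinner]
    calc ⟪y, Pc (Gc y)⟫ ≤ ‖y‖ * ‖Pc (Gc y)‖ := real_inner_le_norm _ _
      _ ≤ ‖y‖ * (‖Pc‖ * ‖Gc y‖) := by
          apply mul_le_mul_of_nonneg_left (Pc.le_opNorm _) (norm_nonneg _)
      _ ≤ ‖y‖ * (‖Pc‖ * (‖Gc‖ * ‖y‖)) := by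
          have := Gc.le_opNorm y
          apply mul_le_mul_of_nonneg_left _ (norm_nonneg _)
          exact mul_le_mul_of_nonneg_left this (norm_nonneg _)
      _ = ‖Pc‖ * ‖Gc‖ * ‖y‖ ^ 2 := by ring
  have hPnorm : (0 : ℝ) ≤ ‖Matrix.toEuclideanCLM (𝕜 := ℝ) P‖ := norm_nonneg _
  have h3 : 2 * (y ⬝ᵥ P.mulVec (G.mulVec y)) ≤ c * ‖y‖ ^ 2 := by
    have step : ‖Matrix.toEuclideanCLM (𝕜 := ℝ) P‖ * ‖Matrix.toEuclideanCLM (𝕜 := ℝ) G‖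
        ≤ ‖Matrix.toEuclideanCLM (𝕜 := ℝ) P‖ * γ :=
      mul_le_mul_of_nonneg_left hG hPnorm
    have : 2 * (‖Matrix.toEuclideanCLM (𝕜 := ℝ) P‖ * γ) ≤ c := by
      rw [hc]; linarith [hgap]
    nlinarith [sq_nonneg ‖y‖, h2]
  rw [hyy] at h1
  linarith
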